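/- Stability bound for n fields (core of Theorem F.1): let k ≥ 1, let ι₁, ι₂ be finite index types of cardinalities n₁, n₂, let q ≥ 1 and M ≥ 0 be real numbers, and let f : ι₁ → (Fin k → ℝ × ℝ), g : ι₂ → (Fin k → ℝ × ℝ) be families such that for every index i and every j ∈ Fin k, writing (f i) j = (a, b), one has a ≤ b and b − a ≤ M, and similarly for g. Define the diagonal-augmented families f̃, g̃ : ι₁ ⊕ ι₂ → (Fin k → ℝ × ℝ) by f̃(inl i) = f i, f̃(inr j) = Diag(g j), g̃(inl i) = Diag(f i), g̃(inr j) = g j. Then D_q(f̃, g̃) ≤ ((n₁ + n₂) · M^q)^{1/q}. (In Theorem F.1, n₁ and n₂ are the quantities T₁ and T₂ bounding the numbers of points of the two multi-dimensional persistence diagrams, and M = max of the amplitudes of all component fields of f and g.) -/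
import Mathlib


/-- The `q`-Wasserstein matching distance between two finite families of points in a
seminormed additive commutative group: the infimum over permutations `σ` of
`(∑ i, ‖f i - g (σ i)‖ ^ q) ^ (1/q)`. -/
noncomputable def wassersteinDist {ι : Type*} [Fintype ι] {E : Type*}
    [SeminormedAddCommGroup E] (q : ℝ) (f g : ι → E) : ℝ :=
  ⨅ σ : Equiv.Perm ι, (∑ i, ‖f i - g (σ i)‖ ^ q) ^ (1 / q)

/-- The diagonal projection of a point of a multi-dimensional persistence diagram of a
multi-field with `k` component scalar fields, recorded as `k` birth–death pairs:
each pair `(a, b)` is sent to `((a+b)/2, (a+b)/2)`. -/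
noncomputable def DiagK {k : ℕ} (x : Fin k → ℝ × ℝ) : Fin k → ℝ × ℝ :=
  fun i => (((x i).1 + (x i).2) / 2, ((x i).1 + (x i).2) / 2)

lemma diag_dist_le {k : ℕ} (M : ℝ) (hM : 0 ≤ M) (x : Fin k → ℝ × ℝ)
    (hx : ∀ j : Fin k, (x j).1 ≤ (x j).2 ∧ (x j).2 - (x j).1 ≤ M) :
    ‖x - DiagK x‖ ≤ M := by
  rw [pi_norm_le_iff_of_nonneg hM]
  intro j
  rw [Prod.norm_def]
  obtain ⟨h1, h2⟩ := hx j
  simp only [Pi.sub_apply, DiagK, Prod.fst_sub, Prod.snd_sub, Real.norm_eq_abs]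
  rw [sup_le_iff, abs_le, abs_le]
  refine ⟨⟨?_, ?_⟩, ?_, ?_⟩ <;> linarith

/-- Stability bound for `n` fields (core of Theorem F.1): if every birth–death pair
of every point of `f` and `g` has persistence at most `M`, then the Wasserstein
matching distance between the diagonal-augmented families is at most
`((n₁ + n₂) M^q)^(1/q)`. -/
theorem stability_bound_n_fields {k : ℕ} (hk : 1 ≤ k)
    {ι₁ ι₂ : Type*} [Fintype ι₁] [Fintype ι₂]
    (q M : ℝ) (hq : 1 ≤ q) (hM : 0 ≤ M)
    (f : ι₁ → Fin k → ℝ × ℝ) (g : ι₂ → Fin k → ℝ × ℝ)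
    (hf : ∀ i, ∀ j : Fin k, (f i j).1 ≤ (f i j).2 ∧ (f i j).2 - (f i j).1 ≤ M)
    (hg : ∀ i, ∀ j : Fin k, (g i j).1 ≤ (g i j).2 ∧ (g i j).2 - (g i j).1 ≤ M) :
    wassersteinDist q
        (Sum.elim f (fun j => DiagK (g j)))
        (Sum.elim (fun i => DiagK (f i)) g)
      ≤ (((Fintype.card ι₁ : ℝ) + (Fintype.card ι₂ : ℝ)) * M ^ q) ^ (1 / q) := by
  have hq0 : 0 < q := lt_of_lt_of_le one_pos hq
  have key : (∑ i : ι₁ ⊕ ι₂,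
      ‖Sum.elim f (fun j => DiagK (g j)) i -
        Sum.elim (fun i => DiagK (f i)) g (Equiv.refl _ i)‖ ^ q) ^ (1 / q)
      ≤ (((Fintype.card ι₁ : ℝ) + (Fintype.card ι₂ : ℝ)) * M ^ q) ^ (1 / q) := by
    apply Real.rpow_le_rpow (Finset.sum_nonneg fun i _ => Real.rpow_nonneg (norm_nonneg _) q)
      _ (by positivity)
    have hbound : ∀ i : ι₁ ⊕ ι₂,
        ‖Sum.elim f (fun j => DiagK (g j)) i -
          Sum.elim (fun i => DiagK (f i)) g (Equiv.refl _ i)‖ ^ q ≤ M ^ q := by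
      rintro (i | j)
      · exact Real.rpow_le_rpow (norm_nonneg _) (diag_dist_le M hM (f i) (hf i)) hq0.le
      · rw [show Sum.elim f (fun j => DiagK (g j)) (Sum.inr j) -
            Sum.elim (fun i => DiagK (f i)) g (Equiv.refl _ (Sum.inr j))
            = -(g j - DiagK (g j)) by simp [neg_sub], norm_neg]
        exact Real.rpow_le_rpow (norm_nonneg _) (diag_dist_le M hM (g j) (hg j)) hq0.le
    calc (∑ i : ι₁ ⊕ ι₂, _) ≤ ∑ _i : ι₁ ⊕ ι₂, M ^ q :=
          Finset.sum_le_sum fun i _ => hbound i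
      _ = ((Fintype.card ι₁ : ℝ) + (Fintype.card ι₂ : ℝ)) * M ^ q := by
          rw [Finset.sum_const, Finset.card_univ, Fintype.card_sum]
          push_cast
          ring
  refine le_trans (ciInf_le ?_ (Equiv.refl _)) key
  exact ⟨0, fun x ⟨σ, hσ⟩ => hσ ▸ Real.rpow_nonneg
    (Finset.sum_nonneg fun i _ => Real.rpow_nonneg (norm_nonneg _) q) _⟩
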